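/- arXiv:2512.13647 — 2 statements merged into one kernel-verified Lean document; each statement's English description precedes it below -/
import Mathlib

section
/- Let E be a finite-dimensional real inner product space and let φ : E → ℝ be differentiable, L-smooth (gradient L-Lipschitz) and μ-strongly convex with μ > 0, attaining its minimum value φ*. Fix γ with 0 < γ ≤ 1/L. Let θ and ξ be random vectors in E on a probability space such that the conditional expectation of ξ given θ is zero and E[‖ξ‖²] ≤ σ². Then E[φ(θ − γ(∇φ(θ) + ξ))] − φ* ≤ (1 − μγ)(E[φ(θ)] − φ*) + (Lγ²/2) σ². -/
open MeasureTheory ProbabilityTheory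
open scoped RealInnerProductSpace

lemma descent_lemma {E : Type*} [NormedAddCommGroup E] [InnerProductSpace ℝ E]
    (φ : E → ℝ) (φ' : E → E) (L : ℝ)
    (hdiff : ∀ θ : E, HasFDerivAt φ (innerSL ℝ (φ' θ)) θ)
    (hsmooth : ∀ θ θ' : E, ‖φ' θ' - φ' θ‖ ≤ L * ‖θ' - θ‖)
    (hcont : Continuous φ') (x y : E) :
    φ y ≤ φ x + ⟪φ' x, y - x⟫ + L / 2 * ‖y - x‖ ^ 2 := by
  set d := y - x with hd
  have key : ∀ t : ℝ, HasDerivAt (fun t : ℝ => φ (x + t • d)) ⟪φ' (x + t • d), d⟫ t := by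
    intro t
    have h1 : HasDerivAt (fun t : ℝ => x + t • d) d t := by
      simpa using ((hasDerivAt_id t).smul_const d).const_add x
    have := (hdiff (x + t • d)).comp_hasDerivAt t h1
    simpa [Function.comp_def] using this
  have hcont2 : Continuous fun t : ℝ => ⟪φ' (x + t • d), d⟫ :=
    (hcont.comp (continuous_const.add (continuous_id.smul continuous_const))).inner
      continuous_const
  have ftc : ∫ t in (0:ℝ)..1, ⟪φ' (x + t • d), d⟫ = φ (x + 1 • d) - φ (x + 0 • d) := by
    have := intervalIntegral.integral_eq_sub_of_hasDerivAt (f := fun t : ℝ => φ (x + t • d))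
      (fun t _ => key t) (hcont2.intervalIntegrable 0 1)
    simpa using this
  have hxy : x + d = y := by simp [hd]
  have h2 : φ y - φ x = ∫ t in (0:ℝ)..1, ⟪φ' (x + t • d), d⟫ := by
    rw [ftc]; simp [hxy]
  have h3 : ∫ t in (0:ℝ)..1, ⟪φ' (x + t • d), d⟫
      ≤ ∫ t in (0:ℝ)..1, (⟪φ' x, d⟫ + L * t * ‖d‖ ^ 2) := by
    refine intervalIntegral.integral_mono_on zero_le_one (hcont2.intervalIntegrable 0 1)
      ((by fun_prop : Continuous fun t : ℝ => ⟪φ' x, d⟫ + L * t * ‖d‖ ^ 2).intervalIntegrable 0 1) fun t ht => ?_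
    have e1 : ⟪φ' (x + t • d), d⟫ = ⟪φ' x, d⟫ + ⟪φ' (x + t • d) - φ' x, d⟫ := by
      rw [inner_sub_left]; ring
    have e2 : ⟪φ' (x + t • d) - φ' x, d⟫ ≤ ‖φ' (x + t • d) - φ' x‖ * ‖d‖ :=
      real_inner_le_norm _ _
    have e3 : ‖φ' (x + t • d) - φ' x‖ ≤ L * (t * ‖d‖) := by
      have := hsmooth x (x + t • d)
      simpa [norm_smul, abs_of_nonneg ht.1] using this
    have hdn : (0:ℝ) ≤ ‖d‖ := norm_nonneg d
    nlinarith [mul_le_mul_of_nonneg_right e3 hdn]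
  have h4 : ∫ t in (0:ℝ)..1, (⟪φ' x, d⟫ + L * t * ‖d‖ ^ 2)
      = ⟪φ' x, d⟫ + L / 2 * ‖d‖ ^ 2 := by
    rw [intervalIntegral.integral_add (intervalIntegrable_const)
      ((by fun_prop : Continuous fun t : ℝ => L * t * ‖d‖ ^ 2).intervalIntegrable 0 1)]
    have : (fun t : ℝ => L * t * ‖d‖ ^ 2) = fun t : ℝ => (L * ‖d‖ ^ 2) * t := by
      funext t; ring
    rw [this, intervalIntegral.integral_const_mul, integral_id]
    simp; ring
  linarith

/-- **One-step descent for an unbiased stochastic gradient step.** Let `E` be a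
finite-dimensional real inner product space and `φ : E → ℝ` be differentiable with
gradient `φ'`, `L`-smooth and `μ`-strongly convex (`μ > 0`), attaining its minimum value
`φ*`. Fix `0 < γ ≤ 1/L`. Let `θ` and `ξ` be random vectors such that `E[ξ | θ] = 0` and
`E[‖ξ‖²] ≤ σ²`. Then
`E[φ(θ - γ(∇φ(θ) + ξ))] - φ* ≤ (1 - μγ)(E[φ(θ)] - φ*) + (Lγ²/2)σ²`. -/
theorem sgd_one_step_descent {E : Type*} [NormedAddCommGroup E] [InnerProductSpace ℝ E]
    [FiniteDimensional ℝ E] [MeasurableSpace E] [BorelSpace E]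
    {Ω : Type*} [MeasureSpace Ω] [IsProbabilityMeasure (ℙ : Measure Ω)]
    (φ : E → ℝ) (φ' : E → E) (L μ : ℝ) (hμ : 0 < μ)
    (hdiff : ∀ θ : E, HasFDerivAt φ (innerSL ℝ (φ' θ)) θ)
    (hsmooth : ∀ θ θ' : E, ‖φ' θ' - φ' θ‖ ≤ L * ‖θ' - θ‖)
    (hsc : ∀ θ θ' : E, φ θ' ≥ φ θ + ⟪φ' θ, θ' - θ⟫ + μ / 2 * ‖θ' - θ‖ ^ 2)
    (φstar : ℝ) (θstar : E) (hlb : ∀ θ : E, φstar ≤ φ θ) (hatt : φ θstar = φstar)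
    (γ : ℝ) (hγ0 : 0 < γ) (hγL : γ ≤ 1 / L)
    (θ ξ : Ω → E) (hθm : Measurable θ) (hξm : Measurable ξ)
    (hξint : Integrable ξ ℙ)
    (hcond : ℙ[ξ | MeasurableSpace.comap θ inferInstance] =ᵐ[ℙ] 0)
    (σ : ℝ) (hξ2int : Integrable (fun ω => ‖ξ ω‖ ^ 2) ℙ)
    (hvar : ∫ ω, ‖ξ ω‖ ^ 2 ∂ℙ ≤ σ ^ 2)
    (hφθint : Integrable (fun ω => φ (θ ω)) ℙ)
    (hφstepint : Integrable (fun ω => φ (θ ω - γ • (φ' (θ ω) + ξ ω))) ℙ) :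
    (∫ ω, φ (θ ω - γ • (φ' (θ ω) + ξ ω)) ∂ℙ) - φstar
      ≤ (1 - μ * γ) * ((∫ ω, φ (θ ω) ∂ℙ) - φstar) + L * γ ^ 2 / 2 * σ ^ 2 := by
  -- positivity of L
  have hL : 0 < L := by
    by_contra h
    push_neg at h
    have : 1 / L ≤ 0 := one_div_nonpos.mpr h
    linarith
  have hγL1 : γ * L ≤ 1 := (le_div_iff₀ hL).mp hγL
  -- continuity of the gradient
  have hφ'cont : Continuous φ' := by
    have : LipschitzWith (Real.toNNReal L) φ' := by
      refine lipschitzWith_iff_dist_le_mul.mpr fun a b => ?_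
      simpa [dist_eq_norm, Real.coe_toNNReal _ hL.le] using hsmooth b a
    exact this.continuous
  -- gradient vanishes at the minimizer
  have hgrad0 : φ' θstar = 0 := by
    have hmin : IsLocalMin φ θstar :=
      Filter.Eventually.of_forall fun x => by rw [hatt]; exact hlb x
    have h0 := hmin.hasFDerivAt_eq_zero (hdiff θstar)
    have h1 : ⟪φ' θstar, φ' θstar⟫ = 0 := by
      have := congrArg (fun T : E →L[ℝ] ℝ => T (φ' θstar)) h0
      simpa using this
    exact inner_self_eq_zero.mp h1
  -- Polyak–Łojasiewicz inequality
  have hPL : ∀ x : E, 2 * μ * (φ x - φstar) ≤ ‖φ' x‖ ^ 2 := by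
    intro x
    have h1 := hsc x θstar
    have h2 : -(‖φ' x‖ * ‖θstar - x‖) ≤ ⟪φ' x, θstar - x⟫ :=
      (abs_le.mp (abs_real_inner_le_norm _ _)).1
    nlinarith [sq_nonneg (‖φ' x‖ - μ * ‖θstar - x‖), hatt, hμ]
  -- upper bound on the gradient norm in terms of the suboptimality
  have hub : ∀ x : E, μ * ‖φ' x‖ ^ 2 ≤ 2 * L ^ 2 * (φ x - φstar) := by
    intro x
    have h1 : ‖φ' x‖ ≤ L * ‖x - θstar‖ := by simpa [hgrad0] using hsmooth θstar x
    have h2 : μ / 2 * ‖x - θstar‖ ^ 2 ≤ φ x - φstar := by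
      have := hsc θstar x
      simp only [hgrad0, hatt, inner_zero_left, add_zero] at this
      linarith
    have h3 : ‖φ' x‖ ^ 2 ≤ L ^ 2 * ‖x - θstar‖ ^ 2 := by
      nlinarith [mul_le_mul h1 h1 (norm_nonneg (φ' x)) (mul_nonneg hL.le (norm_nonneg (x - θstar)))]
    have h4 : μ * ‖φ' x‖ ^ 2 ≤ μ * (L ^ 2 * ‖x - θstar‖ ^ 2) :=
      mul_le_mul_of_nonneg_left h3 hμ.le
    have h5 : L ^ 2 * (μ * ‖x - θstar‖ ^ 2) ≤ L ^ 2 * (2 * (φ x - φstar)) :=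
      mul_le_mul_of_nonneg_left (by linarith) (sq_nonneg L)
    linarith
  -- integrability of ‖φ'(θ)‖²
  have hgmeas : AEStronglyMeasurable (fun ω => ‖φ' (θ ω)‖ ^ 2) ℙ :=
    (((hφ'cont.measurable.comp hθm).norm).pow_const 2).aestronglyMeasurable
  have hgint : Integrable (fun ω => ‖φ' (θ ω)‖ ^ 2) ℙ := by
    refine Integrable.mono' (((hφθint.sub (integrable_const φstar)).const_mul
      (2 * L ^ 2)).div_const μ) hgmeas (Filter.Eventually.of_forall fun ω => ?_)
    simp only [Pi.sub_apply]
    rw [Real.norm_of_nonneg (by positivity), le_div_iff₀ hμ]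
    have := hub (θ ω)
    linarith
  -- integrability of the cross term
  have hipmeas : AEStronglyMeasurable (fun ω => ⟪φ' (θ ω), ξ ω⟫) ℙ :=
    ((hφ'cont.measurable.comp hθm).inner hξm).aestronglyMeasurable
  have hipint : Integrable (fun ω => ⟪φ' (θ ω), ξ ω⟫) ℙ := by
    refine Integrable.mono' ((hgint.add hξ2int).div_const 2) hipmeas
      (Filter.Eventually.of_forall fun ω => ?_)
    have h1 : |⟪φ' (θ ω), ξ ω⟫| ≤ ‖φ' (θ ω)‖ * ‖ξ ω‖ := abs_real_inner_le_norm _ _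
    simp only [Pi.add_apply]
    rw [Real.norm_eq_abs]
    nlinarith [sq_nonneg (‖φ' (θ ω)‖ - ‖ξ ω‖)]
  -- the cross term has zero mean
  have hm : MeasurableSpace.comap θ inferInstance ≤ (inferInstance : MeasurableSpace Ω) :=
    hθm.comap_le
  have hθmm : Measurable[MeasurableSpace.comap θ inferInstance] θ := fun s hs => ⟨s, hs, rfl⟩
  set b := stdOrthonormalBasis ℝ E with hb
  have hterm_int : ∀ i, Integrable (fun ω => ⟪φ' (θ ω), b i⟫ * ⟪b i, ξ ω⟫) ℙ := by
    intro i
    refine Integrable.mono' ((hgint.add hξ2int).div_const 2)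
      ((((hφ'cont.measurable.comp hθm).inner measurable_const).mul
        (measurable_const.inner hξm)).aestronglyMeasurable)
      (Filter.Eventually.of_forall fun ω => ?_)
    have hbi : ‖b i‖ = 1 := b.orthonormal.1 i
    have h1 : |⟪φ' (θ ω), b i⟫| ≤ ‖φ' (θ ω)‖ := by
      have := abs_real_inner_le_norm (φ' (θ ω)) (b i); rw [hbi] at this; simpa using this
    have h2 : |⟪b i, ξ ω⟫| ≤ ‖ξ ω‖ := by
      have := abs_real_inner_le_norm (b i) (ξ ω); rw [hbi] at this; simpa using this
    simp only [Pi.add_apply]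
    rw [Real.norm_eq_abs, abs_mul]
    nlinarith [sq_nonneg (‖φ' (θ ω)‖ - ‖ξ ω‖), abs_nonneg ⟪φ' (θ ω), b i⟫,
      abs_nonneg ⟪b i, ξ ω⟫, norm_nonneg (φ' (θ ω)), norm_nonneg (ξ ω),
      mul_le_mul h1 h2 (abs_nonneg _) (norm_nonneg _)]
  have hterm_zero : ∀ i, ∫ ω, ⟪φ' (θ ω), b i⟫ * ⟪b i, ξ ω⟫ ∂ℙ = 0 := by
    intro i
    have hξi_int : Integrable (fun ω => ⟪b i, ξ ω⟫) ℙ := by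
      refine Integrable.mono' hξint.norm
        ((measurable_const.inner hξm).aestronglyMeasurable)
        (Filter.Eventually.of_forall fun ω => ?_)
      have hbi : ‖b i‖ = 1 := b.orthonormal.1 i
      rw [Real.norm_eq_abs]
      have := abs_real_inner_le_norm (b i) (ξ ω); rw [hbi] at this; simpa using this
    have hcoord : ℙ[fun ω => ⟪b i, ξ ω⟫ | MeasurableSpace.comap θ inferInstance] =ᵐ[ℙ] 0 := by
      refine (ae_eq_condExp_of_forall_setIntegral_eq hm hξi_int
        (fun s _ _ => (integrable_zero _ _ _).integrableOn)
        (fun s hs _ => ?_)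
        (stronglyMeasurable_const.aestronglyMeasurable)).symm
      have hsint : ∫ ω in s, ξ ω ∂ℙ = 0 := by
        rw [← setIntegral_condExp hm hξint hs]
        rw [setIntegral_congr_ae (hm s hs) (hcond.mono fun ω hω _ => hω)]
        simp
      have : ∫ ω in s, ⟪b i, ξ ω⟫ ∂ℙ = ⟪b i, ∫ ω in s, ξ ω ∂ℙ⟫ :=
        integral_inner hξint.integrableOn (b i)
      rw [this, hsint]
      simp
    have hgi_meas : StronglyMeasurable[MeasurableSpace.comap θ inferInstance] (fun ω => ⟪φ' (θ ω), b i⟫) := by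
      have : Measurable[MeasurableSpace.comap θ inferInstance] (fun ω => ⟪φ' (θ ω), b i⟫) :=
        ((hφ'cont.inner continuous_const).measurable).comp hθmm
      exact this.stronglyMeasurable
    have hpull := condExp_mul_of_stronglyMeasurable_left  hgi_meas
      (show Integrable ((fun ω => ⟪φ' (θ ω), b i⟫) * fun ω => ⟪b i, ξ ω⟫) ℙ from
        hterm_int i) hξi_int
    calc ∫ ω, ⟪φ' (θ ω), b i⟫ * ⟪b i, ξ ω⟫ ∂ℙ
        = ∫ ω, (ℙ[(fun ω => ⟪φ' (θ ω), b i⟫) * fun ω => ⟪b i, ξ ω⟫ | MeasurableSpace.comap θ inferInstance]) ω ∂ℙ :=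
          (integral_condExp hm).symm
      _ = ∫ ω, ⟪φ' (θ ω), b i⟫ * (ℙ[fun ω => ⟪b i, ξ ω⟫ | MeasurableSpace.comap θ inferInstance]) ω ∂ℙ :=
          integral_congr_ae (hpull.mono fun ω hω => by simpa using hω)
      _ = ∫ ω, ⟪φ' (θ ω), b i⟫ * (0:ℝ) ∂ℙ :=
          integral_congr_ae (hcoord.mono fun ω hω => by
            simp only [Pi.zero_apply] at hω; simp only []; rw [hω])
      _ = 0 := by simp
  have hzero : ∫ ω, ⟪φ' (θ ω), ξ ω⟫ ∂ℙ = 0 := by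
    have hexp : (fun ω => ⟪φ' (θ ω), ξ ω⟫)
        = fun ω => ∑ i, ⟪φ' (θ ω), b i⟫ * ⟪b i, ξ ω⟫ := by
      funext ω
      exact (b.sum_inner_mul_inner _ _).symm
    rw [hexp, integral_finset_sum _ fun i _ => hterm_int i]
    simp [hterm_zero]
  -- pointwise bound
  set H : Ω → ℝ := fun ω => φ (θ ω) - μ * γ * (φ (θ ω) - φstar)
      + (L * γ ^ 2 - γ) * ⟪φ' (θ ω), ξ ω⟫ + L * γ ^ 2 / 2 * ‖ξ ω‖ ^ 2 with hH
  have hpt : ∀ ω, φ (θ ω - γ • (φ' (θ ω) + ξ ω)) ≤ H ω := by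
    intro ω
    set x := θ ω
    set g := φ' x with hg
    set u := ξ ω
    have hd := descent_lemma φ φ' L hdiff hsmooth hφ'cont x (x - γ • (g + u))
    have e1 : x - γ • (g + u) - x = -(γ • (g + u)) := by abel
    rw [e1] at hd
    have e2 : ⟪g, -(γ • (g + u))⟫ = -(γ * (‖g‖ ^ 2 + ⟪g, u⟫)) := by
      rw [inner_neg_right, real_inner_smul_right, inner_add_right,
        real_inner_self_eq_norm_sq]
    have e3 : ‖-(γ • (g + u))‖ ^ 2 = γ ^ 2 * (‖g‖ ^ 2 + 2 * ⟪g, u⟫ + ‖u‖ ^ 2) := by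
      rw [norm_neg, norm_smul, Real.norm_eq_abs, abs_of_nonneg hγ0.le, mul_pow,
        norm_add_sq_real]
    rw [e2, e3] at hd
    have hPLx := hPL x
    have hin : φstar ≤ φ x := hlb x
    have hg2 : (0:ℝ) ≤ ‖g‖ ^ 2 := sq_nonneg _
    simp only [hH]
    nlinarith [mul_le_mul_of_nonneg_left hPLx (by positivity : (0:ℝ) ≤ γ / 2),
      mul_nonneg (mul_nonneg (by linarith : (0:ℝ) ≤ γ / 2) (by linarith : (0:ℝ) ≤ 1 - γ * L)) hg2]
  have hHint : Integrable H ℙ := by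
    refine Integrable.add (Integrable.add ?_ (hipint.const_mul _)) (hξ2int.const_mul _)
    exact hφθint.sub ((hφθint.sub (integrable_const φstar)).const_mul _)
  have hIH : ∫ ω, φ (θ ω - γ • (φ' (θ ω) + ξ ω)) ∂ℙ ≤ ∫ ω, H ω ∂ℙ :=
    integral_mono hφstepint hHint hpt
  have hHval : ∫ ω, H ω ∂ℙ = (1 - μ * γ) * (∫ ω, φ (θ ω) ∂ℙ) + μ * γ * φstar
      + (L * γ ^ 2 - γ) * (∫ ω, ⟪φ' (θ ω), ξ ω⟫ ∂ℙ)
      + L * γ ^ 2 / 2 * (∫ ω, ‖ξ ω‖ ^ 2 ∂ℙ) := by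
    have hrw : H = fun ω => ((1 - μ * γ) * φ (θ ω) + μ * γ * φstar)
        + ((L * γ ^ 2 - γ) * ⟪φ' (θ ω), ξ ω⟫ + L * γ ^ 2 / 2 * ‖ξ ω‖ ^ 2) := by
      funext ω; simp only [hH]; ring
    simp only [hrw]
    have hA : Integrable (fun ω => (1 - μ * γ) * φ (θ ω) + μ * γ * φstar) ℙ :=
      (hφθint.const_mul _).add (integrable_const _)
    have hB : Integrable (fun ω => (L * γ ^ 2 - γ) * ⟪φ' (θ ω), ξ ω⟫
        + L * γ ^ 2 / 2 * ‖ξ ω‖ ^ 2) ℙ :=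
      (hipint.const_mul _).add (hξ2int.const_mul _)
    rw [integral_add hA hB,
      integral_add (hφθint.const_mul _) (integrable_const _),
      integral_add (hipint.const_mul _) (hξ2int.const_mul _),
      integral_const_mul, integral_const_mul, integral_const_mul, integral_const_mul, integral_const]
    simp only [measure_univ, probReal_univ, one_smul, smul_eq_mul, one_mul]
    ring
  have hfinal : L * γ ^ 2 / 2 * (∫ ω, ‖ξ ω‖ ^ 2 ∂ℙ) ≤ L * γ ^ 2 / 2 * σ ^ 2 :=
    mul_le_mul_of_nonneg_left hvar (by positivity)
  have hexpand : (1 - μ * γ) * ((∫ ω, φ (θ ω) ∂ℙ) - φstar)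
      = (1 - μ * γ) * (∫ ω, φ (θ ω) ∂ℙ) + μ * γ * φstar - φstar := by ring
  rw [hHval, hzero] at hIH
  linarith
end

section
/- Let E be a finite-dimensional real inner product space and let φ : E → ℝ be differentiable, L-smooth (gradient L-Lipschitz) and μ-strongly convex with μ > 0, attaining its minimum value φ*. Fix γ_r with 0 < γ_r ≤ 1/L and an integer r ≥ 1. On a probability space, let θ_0, θ_1, …, θ_r be random vectors in E generated by θ_{s+1} = θ_s − γ_r (∇φ(θ_s) + ξ_s), where each noise vector ξ_s has zero conditional expectation given θ_0, …, θ_s and satisfies E[‖ξ_s‖²] ≤ σ_r². Then E[φ(θ_r)] − φ* ≤ (1 − μγ_r)^r (E[φ(θ_0)] − φ*) + (L γ_r² r / 2) σ_r². -/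
open MeasureTheory ProbabilityTheory
open scoped RealInnerProductSpace


open MeasureTheory ProbabilityTheory
open scoped RealInnerProductSpace

section Aux

variable {E : Type*} [NormedAddCommGroup E] [InnerProductSpace ℝ E]

/-- Descent lemma: an `L`-smooth function is bounded by its quadratic upper model. -/
lemma smooth_descent_aux (φ : E → ℝ) (φ' : E → E) (L : ℝ)
    (hdiff : ∀ θ : E, HasFDerivAt φ (innerSL ℝ (φ' θ)) θ)
    (hsmooth : ∀ θ θ' : E, ‖φ' θ' - φ' θ‖ ≤ L * ‖θ' - θ‖) (x y : E) :
    φ y ≤ φ x + ⟪φ' x, y - x⟫ + L / 2 * ‖y - x‖ ^ 2 := by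
  set v := y - x with hv
  set F : ℝ → ℝ := fun t => φ (x + t • v) - t * ⟪φ' x, v⟫ - L / 2 * (t ^ 2 * ‖v‖ ^ 2) with hF
  have hder : ∀ t : ℝ, HasDerivAt F
      (⟪φ' (x + t • v), v⟫ - ⟪φ' x, v⟫ - L / 2 * (2 * t * ‖v‖ ^ 2)) t := by
    intro t
    have h1 : HasDerivAt (fun t : ℝ => x + t • v) v t := by
      simpa using ((hasDerivAt_id t).smul_const v).const_add x
    have h2 : HasDerivAt (fun t : ℝ => φ (x + t • v)) ⟪φ' (x + t • v), v⟫ t := by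
      have h := (hdiff (x + t • v)).comp_hasDerivAt t h1
      exact h
    have h3 : HasDerivAt (fun t : ℝ => t * ⟪φ' x, v⟫) ⟪φ' x, v⟫ t := by
      simpa using (hasDerivAt_id t).mul_const ⟪φ' x, v⟫
    have h4 : HasDerivAt (fun t : ℝ => L / 2 * (t ^ 2 * ‖v‖ ^ 2)) (L / 2 * (2 * t * ‖v‖ ^ 2)) t := by
      have h5 : HasDerivAt (fun t : ℝ => t ^ 2) (2 * t) t := by
        simpa using hasDerivAt_pow 2 t
      have h6 := (h5.mul_const (‖v‖ ^ 2)).const_mul (L / 2)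
      simpa [mul_comm, mul_assoc, mul_left_comm] using h6
    exact (h2.sub h3).sub h4
  have hmono : AntitoneOn F (Set.Icc (0:ℝ) 1) := by
    apply antitoneOn_of_deriv_nonpos (convex_Icc 0 1)
    · exact fun t _ => ((hder t).differentiableAt.continuousAt).continuousWithinAt
    · exact fun t _ => ((hder t).differentiableAt).differentiableWithinAt
    · intro t ht
      rw [interior_Icc] at ht
      rw [(hder t).deriv]
      have h7 : ⟪φ' (x + t • v) - φ' x, v⟫ ≤ ‖φ' (x + t • v) - φ' x‖ * ‖v‖ :=
        real_inner_le_norm _ _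
      have h8 : ‖φ' (x + t • v) - φ' x‖ ≤ L * ‖x + t • v - x‖ := hsmooth x (x + t • v)
      have h9 : ‖x + t • v - x‖ = t * ‖v‖ := by
        rw [add_sub_cancel_left, norm_smul, Real.norm_eq_abs, abs_of_pos ht.1]
      rw [h9] at h8
      rw [inner_sub_left] at h7
      nlinarith [mul_le_mul_of_nonneg_right h8 (norm_nonneg v)]
  have hle : F 1 ≤ F 0 := hmono (Set.left_mem_Icc.mpr zero_le_one)
    (Set.right_mem_Icc.mpr zero_le_one) zero_le_one
  have hF0 : F 0 = φ x := by simp [hF]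
  have hF1 : F 1 = φ y - ⟪φ' x, v⟫ - L / 2 * ‖v‖ ^ 2 := by
    simp [hF, hv]
  rw [hF0, hF1] at hle
  linarith

end Aux

open MeasureTheory ProbabilityTheory
open scoped RealInnerProductSpace

/-- If `X` is `m`-measurable and `E[ξ | m] = 0` a.e., then `E⟪X, ξ⟫ = 0`,
provided both have square-integrable norms. -/
lemma integral_inner_zero_aux {E : Type*} [NormedAddCommGroup E] [InnerProductSpace ℝ E]
    [FiniteDimensional ℝ E] [MeasurableSpace E] [BorelSpace E]
    {Ω : Type*} {m : MeasurableSpace Ω} {m0 : MeasurableSpace Ω} {μ : Measure Ω}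
    [IsProbabilityMeasure μ] (hm : m ≤ m0)
    (X ξ : Ω → E) (hX : StronglyMeasurable[m] X)
    (hξint : Integrable ξ μ) (hcond : μ[ξ | m] =ᵐ[μ] 0)
    (hX2 : Integrable (fun ω => ‖X ω‖ ^ 2) μ) (hξ2 : Integrable (fun ω => ‖ξ ω‖ ^ 2) μ) :
    ∫ ω, ⟪X ω, ξ ω⟫ ∂μ = 0 := by
  classical
  set b := stdOrthonormalBasis ℝ E with hb
  have hXsm : StronglyMeasurable[m0] X := hX.mono hm
  have hξsm : AEStronglyMeasurable ξ μ := hξint.aestronglyMeasurable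
  -- integrability of each coordinate product
  have hgi : ∀ i, Integrable (fun ω => ⟪b i, ξ ω⟫) μ := by
    intro i
    refine hξint.norm.mono' ?_ ?_
    · exact aestronglyMeasurable_const.inner hξsm
    · filter_upwards with ω
      simpa [Real.norm_eq_abs] using
        (abs_real_inner_le_norm (b i) (ξ ω)).trans (by simp [b.orthonormal.1 i])
  have hfgi : ∀ i, Integrable (fun ω => ⟪X ω, b i⟫ * ⟪b i, ξ ω⟫) μ := by
    intro i
    have hdom : Integrable (fun ω => (‖X ω‖ ^ 2 + ‖ξ ω‖ ^ 2) / 2) μ := (hX2.add hξ2).div_const 2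
    refine hdom.mono' ?_ ?_
    · exact (hXsm.aestronglyMeasurable.inner aestronglyMeasurable_const).mul
        (aestronglyMeasurable_const.inner hξsm)
    · filter_upwards with ω
      have h1 : |⟪X ω, b i⟫| ≤ ‖X ω‖ := by
        simpa [b.orthonormal.1 i] using abs_real_inner_le_norm (X ω) (b i)
      have h2 : |⟪b i, ξ ω⟫| ≤ ‖ξ ω‖ := by
        simpa [b.orthonormal.1 i] using abs_real_inner_le_norm (b i) (ξ ω)
      rw [Real.norm_eq_abs, abs_mul]
      nlinarith [abs_nonneg ⟪X ω, b i⟫, abs_nonneg ⟪b i, ξ ω⟫, norm_nonneg (X ω),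
        norm_nonneg (ξ ω), sq_nonneg (‖X ω‖ - ‖ξ ω‖)]
  -- conditional expectation of each coordinate of ξ is zero
  have hcond_i : ∀ i, μ[fun ω => ⟪b i, ξ ω⟫ | m] =ᵐ[μ] 0 := by
    intro i
    refine ((ae_eq_condExp_of_forall_setIntegral_eq hm (hgi i) ?_ ?_ ?_).symm)
    · exact fun s _ _ => (integrable_zero _ _ _).integrableOn
    · intro s hs hμs
      have h0 : ∫ ω in s, ξ ω ∂μ = 0 := by
        rw [← setIntegral_condExp hm hξint hs]
        rw [setIntegral_congr_ae (hm s hs) (hcond.mono fun ω hω _ => hω)]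
        simp
      have h1 : ∫ ω in s, ⟪b i, ξ ω⟫ ∂μ = ⟪b i, ∫ ω in s, ξ ω ∂μ⟫ :=
        integral_inner hξint.integrableOn (b i)
      rw [h1, h0]
      simp
    · exact stronglyMeasurable_const.aestronglyMeasurable
  -- each term has zero expectation
  have hterm : ∀ i, ∫ ω, ⟪X ω, b i⟫ * ⟪b i, ξ ω⟫ ∂μ = 0 := by
    intro i
    have hfm : StronglyMeasurable[m] fun ω => ⟪X ω, b i⟫ :=
      hX.inner stronglyMeasurable_const
    have hpull := condExp_mul_of_stronglyMeasurable_left (μ := μ) hfm (hfgi i) (hgi i)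
    calc ∫ ω, ⟪X ω, b i⟫ * ⟪b i, ξ ω⟫ ∂μ
        = ∫ ω, (μ[(fun ω => ⟪X ω, b i⟫) * (fun ω => ⟪b i, ξ ω⟫) | m]) ω ∂μ := by
          rw [integral_condExp hm (f := (fun ω => ⟪X ω, b i⟫) * (fun ω => ⟪b i, ξ ω⟫))]; rfl
      _ = 0 := by
          rw [integral_congr_ae hpull]
          have h3 : ∀ᵐ ω ∂μ, ((fun ω => ⟪X ω, b i⟫) * μ[(fun ω => ⟪b i, ξ ω⟫) | m]) ω = 0 := by
            filter_upwards [hcond_i i] with ω hω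
            simp [Pi.mul_apply, hω]
          rw [integral_congr_ae h3, integral_zero]
  have hexp : ∀ ω, ⟪X ω, ξ ω⟫ = ∑ i, ⟪X ω, b i⟫ * ⟪b i, ξ ω⟫ := fun ω =>
    (b.sum_inner_mul_inner _ _).symm
  calc ∫ ω, ⟪X ω, ξ ω⟫ ∂μ = ∫ ω, ∑ i, ⟪X ω, b i⟫ * ⟪b i, ξ ω⟫ ∂μ := by simp_rw [hexp]
    _ = ∑ i, ∫ ω, ⟪X ω, b i⟫ * ⟪b i, ξ ω⟫ ∂μ := integral_finset_sum _ fun i _ => hfgi i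
    _ = 0 := by simp [hterm]
/-- Abstract geometric recursion bound. -/
lemma geom_rec_bound_aux (D : ℕ → ℝ) (a c : ℝ) (ha0 : 0 ≤ a) (ha1 : a ≤ 1) (hc : 0 ≤ c)
    (hstep : ∀ n, D (n + 1) ≤ a * D n + c) : ∀ n, D n ≤ a ^ n * D 0 + n * c := by
  intro n
  induction n with
  | zero => simp
  | succ n ih =>
    have h2 := mul_le_mul_of_nonneg_left ih ha0
    have h4 : a * ((n : ℝ) * c) ≤ (n : ℝ) * c :=
      mul_le_of_le_one_left (mul_nonneg (Nat.cast_nonneg n) hc) ha1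
    calc D (n + 1) ≤ a * D n + c := hstep n
      _ ≤ a * (a ^ n * D 0 + (n : ℝ) * c) + c := by linarith
      _ = a ^ (n + 1) * D 0 + (a * ((n : ℝ) * c) + c) := by ring
      _ ≤ a ^ (n + 1) * D 0 + ((n : ℝ) * c + c) := by linarith
      _ = a ^ (n + 1) * D 0 + ((n + 1 : ℕ) : ℝ) * c := by push_cast; ring

/-- **Reserve r-step descent (Proposition 2, ε_r = 0).** Let `E` be a finite-dimensional
real inner product space and `φ : E → ℝ` be differentiable with gradient `φ'`, `L`-smooth
and `μ`-strongly convex (`μ > 0`), attaining its minimum value `φ*`. Fix `0 < γ_r ≤ 1/L` and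
an integer `r ≥ 1`. Let `θ_0, …, θ_r` be random vectors generated by
`θ_{s+1} = θ_s - γ_r (∇φ(θ_s) + ξ_s)`, where each noise `ξ_s` has zero conditional
expectation given `θ_0, …, θ_s` and satisfies `E[‖ξ_s‖²] ≤ σ_r²`. Then
`E[φ(θ_r)] - φ* ≤ (1 - μγ_r)^r (E[φ(θ_0)] - φ*) + (L γ_r² r / 2) σ_r²`. -/
theorem reserve_r_step_descent {E : Type*} [NormedAddCommGroup E] [InnerProductSpace ℝ E]
    [FiniteDimensional ℝ E] [MeasurableSpace E] [BorelSpace E]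
    {Ω : Type*} [MeasureSpace Ω] [IsProbabilityMeasure (ℙ : Measure Ω)]
    (φ : E → ℝ) (φ' : E → E) (L μ : ℝ) (hμ : 0 < μ)
    (hdiff : ∀ θ : E, HasFDerivAt φ (innerSL ℝ (φ' θ)) θ)
    (hsmooth : ∀ θ θ' : E, ‖φ' θ' - φ' θ‖ ≤ L * ‖θ' - θ‖)
    (hsc : ∀ θ θ' : E, φ θ' ≥ φ θ + ⟪φ' θ, θ' - θ⟫ + μ / 2 * ‖θ' - θ‖ ^ 2)
    (φstar : ℝ) (θstar : E) (hlb : ∀ θ : E, φstar ≤ φ θ) (hatt : φ θstar = φstar)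
    (γr : ℝ) (hγr0 : 0 < γr) (hγrL : γr ≤ 1 / L)
    (r : ℕ) (hr : 1 ≤ r)
    (θ : ℕ → Ω → E) (ξ : ℕ → Ω → E)
    (hθm : ∀ s, Measurable (θ s)) (hξm : ∀ s, Measurable (ξ s))
    (hiter : ∀ s : ℕ, ∀ ω : Ω, θ (s + 1) ω = θ s ω - γr • (φ' (θ s ω) + ξ s ω))
    (hξint : ∀ s, Integrable (ξ s) ℙ)
    (hcond : ∀ s : ℕ,
      ℙ[ξ s | ⨆ i ≤ s, MeasurableSpace.comap (θ i) inferInstance] =ᵐ[ℙ] 0)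
    (σr : ℝ) (hξ2int : ∀ s, Integrable (fun ω => ‖ξ s ω‖ ^ 2) ℙ)
    (hvar : ∀ s : ℕ, ∫ ω, ‖ξ s ω‖ ^ 2 ∂ℙ ≤ σr ^ 2)
    (hφint : ∀ s, Integrable (fun ω => φ (θ s ω)) ℙ) :
    (∫ ω, φ (θ r ω) ∂ℙ) - φstar
      ≤ (1 - μ * γr) ^ r * ((∫ ω, φ (θ 0 ω) ∂ℙ) - φstar)
        + L * γr ^ 2 * r / 2 * σr ^ 2 := by
  have hL : 0 < L := by
    by_contra h
    push_neg at h
    have : 1 / L ≤ 0 := one_div_nonpos.mpr h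
    linarith
  have hσ : 0 ≤ σr ^ 2 :=
    le_trans (integral_nonneg fun ω => sq_nonneg _) (hvar 0)
  have hc : 0 ≤ L * γr ^ 2 / 2 * σr ^ 2 := by
    apply mul_nonneg _ hσ
    exact div_nonneg (mul_nonneg hL.le (sq_nonneg _)) (by norm_num)
  rcases subsingleton_or_nontrivial E with hE | hE
  · -- trivial space: everything collapses to the minimizer
    have hθeq : ∀ s (ω : Ω), φ (θ s ω) = φstar := fun s ω => by
      rw [Subsingleton.elim (θ s ω) θstar, hatt]
    simp only [hθeq, integral_const, measure_univ, probReal_univ, one_smul,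
      sub_self, mul_zero, zero_add]
    have : 0 ≤ L * γr ^ 2 * (r : ℝ) / 2 * σr ^ 2 := by
      apply mul_nonneg _ hσ
      exact div_nonneg (mul_nonneg (mul_nonneg hL.le (sq_nonneg _)) (Nat.cast_nonneg r))
        (by norm_num)
    linarith
  · have hLγ1 : γr * L ≤ 1 := by
      rw [le_div_iff₀ hL] at hγrL
      exact hγrL
    -- μ ≤ L since E is nontrivial
    have hμL : μ ≤ L := by
      obtain ⟨v, hv⟩ := exists_ne (0 : E)
      have h1 := hsc 0 v
      have h2 := hsc v 0
      have h3 := hsmooth 0 v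
      have h4 : ⟪φ' v, v⟫ - ⟪φ' 0, v⟫ ≤ ‖φ' v - φ' 0‖ * ‖v‖ := by
        rw [← inner_sub_left]; exact real_inner_le_norm _ _
      simp only [sub_zero, zero_sub, norm_neg, inner_neg_right] at h1 h2 h3
      have hvpos : 0 < ‖v‖ := norm_pos_iff.mpr hv
      have h5 : μ * ‖v‖ ^ 2 ≤ L * ‖v‖ ^ 2 := by
        nlinarith [mul_le_mul_of_nonneg_right h3 (norm_nonneg v)]
      exact (mul_le_mul_iff_left₀ (pow_pos hvpos 2)).mp h5
    have ha0 : 0 ≤ 1 - μ * γr := by nlinarith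
    have ha1 : 1 - μ * γr ≤ 1 := by nlinarith [mul_pos hμ hγr0]
    -- Polyak–Łojasiewicz inequality
    have hPL : ∀ z : E, 2 * μ * (φ z - φstar) ≤ ‖φ' z‖ ^ 2 := by
      intro z
      have h := hsc z θstar
      rw [hatt] at h
      have hkey : (0:ℝ) ≤ ‖φ' z + μ • (θstar - z)‖ ^ 2 := sq_nonneg _
      rw [norm_add_sq_real, real_inner_smul_right, norm_smul, Real.norm_eq_abs,
        abs_of_pos hμ, mul_pow] at hkey
      nlinarith [mul_le_mul_of_nonneg_left h hμ.le]
    -- one-step descent in expectation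
    have hstep : ∀ s : ℕ, (∫ ω, φ (θ (s + 1) ω) ∂ℙ) - φstar ≤
        (1 - μ * γr) * ((∫ ω, φ (θ s ω) ∂ℙ) - φstar) + L * γr ^ 2 / 2 * σr ^ 2 := by
      intro s
      have hφ'cont : Continuous φ' := by
        have hlip : LipschitzWith (Real.toNNReal L) φ' :=
          LipschitzWith.of_dist_le_mul fun a b => by
            rw [dist_eq_norm, dist_eq_norm, Real.coe_toNNReal L hL.le]
            exact hsmooth b a
        exact hlip.continuous
      -- gradient-norm bound from the descent lemma
      have hGB : ∀ z : E, ‖φ' z‖ ^ 2 ≤ 2 * L * (φ z - φstar) := by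
        intro z
        have h := smooth_descent_aux φ φ' L hdiff hsmooth z (z - L⁻¹ • φ' z)
        have h1 : z - L⁻¹ • φ' z - z = -(L⁻¹ • φ' z) := by abel
        rw [h1, inner_neg_right, real_inner_smul_right, real_inner_self_eq_norm_sq,
          norm_neg, norm_smul, Real.norm_eq_abs, abs_of_pos (inv_pos.mpr hL), mul_pow] at h
        have h2 := hlb (z - L⁻¹ • φ' z)
        have h5 : φstar ≤ φ z - L⁻¹ / 2 * ‖φ' z‖ ^ 2 := by
          have e : -(L⁻¹ * ‖φ' z‖ ^ 2) + L / 2 * (L⁻¹ ^ 2 * ‖φ' z‖ ^ 2)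
              = -(L⁻¹ / 2 * ‖φ' z‖ ^ 2) := by
            field_simp
            ring
          linarith
        calc ‖φ' z‖ ^ 2 = 2 * L * (L⁻¹ / 2 * ‖φ' z‖ ^ 2) := by
              have e2 : 2 * L * (L⁻¹ / 2 * ‖φ' z‖ ^ 2) = (L * L⁻¹) * ‖φ' z‖ ^ 2 := by ring
              rw [e2, mul_inv_cancel₀ hL.ne', one_mul]
          _ ≤ 2 * L * (φ z - φstar) := by
              apply mul_le_mul_of_nonneg_left _ (by linarith)
              linarith
      set m : MeasurableSpace Ω := ⨆ i ≤ s, MeasurableSpace.comap (θ i) inferInstance with hmdef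
      have hm : m ≤ MeasureSpace.toMeasurableSpace :=
        iSup₂_le fun i _ => (hθm i).comap_le
      have hθsm : Measurable[m] (θ s) := by
        have hle : MeasurableSpace.comap (θ s) inferInstance ≤ m :=
          le_iSup₂ (f := fun i (_ : i ≤ s) => MeasurableSpace.comap (θ i) inferInstance) s le_rfl
        exact fun t ht => hle _ ⟨t, ht, rfl⟩
      have hXsm : StronglyMeasurable[m] fun ω => φ' (θ s ω) :=
        (hφ'cont.measurable.comp hθsm).stronglyMeasurable
      have hG2int : Integrable (fun ω => ‖φ' (θ s ω)‖ ^ 2) ℙ := by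
        have hgi : Integrable (fun ω => 2 * L * (φ (θ s ω) - φstar)) ℙ :=
          (((hφint s).sub (integrable_const φstar)).const_mul (2 * L))
        refine hgi.mono' ?_ ?_
        · exact (((hφ'cont.norm.pow 2).measurable.comp (hθm s))).aestronglyMeasurable
        · filter_upwards with ω
          rw [Real.norm_eq_abs, abs_of_nonneg (sq_nonneg _)]
          exact hGB (θ s ω)
      have hI0 : ∫ ω, ⟪φ' (θ s ω), ξ s ω⟫ ∂ℙ = 0 :=
        integral_inner_zero_aux hm _ _ hXsm (hξint s) (hcond s) hG2int (hξ2int s)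
      -- pointwise one-step bound
      have hpt : ∀ ω, φ (θ (s + 1) ω) - φstar ≤ (1 - μ * γr) * (φ (θ s ω) - φstar)
          + (L * γr ^ 2 - γr) * ⟪φ' (θ s ω), ξ s ω⟫ + L * γr ^ 2 / 2 * ‖ξ s ω‖ ^ 2 := by
        intro ω
        have hd := smooth_descent_aux φ φ' L hdiff hsmooth (θ s ω) (θ (s + 1) ω)
        have hyx : θ (s + 1) ω - θ s ω = -(γr • (φ' (θ s ω) + ξ s ω)) := by
          rw [hiter s ω]; abel
        rw [hyx, inner_neg_right, real_inner_smul_right, inner_add_right,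
          real_inner_self_eq_norm_sq, norm_neg, norm_smul, Real.norm_eq_abs,
          abs_of_pos hγr0, mul_pow, norm_add_sq_real] at hd
        have hPLx := hPL (θ s ω)
        have hlbx := hlb (θ s ω)
        nlinarith [mul_nonneg (mul_nonneg hγr0.le (sub_nonneg.mpr hLγ1))
            (sq_nonneg ‖φ' (θ s ω)‖),
          mul_nonneg hγr0.le (sub_nonneg.mpr hPLx)]
      -- integrability of the right-hand side
      have hIint : Integrable (fun ω => ⟪φ' (θ s ω), ξ s ω⟫) ℙ := by
        have hdom : Integrable (fun ω => (‖φ' (θ s ω)‖ ^ 2 + ‖ξ s ω‖ ^ 2) / 2) ℙ :=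
          (hG2int.add (hξ2int s)).div_const 2
        refine hdom.mono' ?_ ?_
        · exact ((hφ'cont.measurable.comp (hθm s)).aestronglyMeasurable.inner
            (hξm s).aestronglyMeasurable)
        · filter_upwards with ω
          rw [Real.norm_eq_abs]
          nlinarith [abs_real_inner_le_norm (φ' (θ s ω)) (ξ s ω),
            sq_nonneg (‖φ' (θ s ω)‖ - ‖ξ s ω‖), norm_nonneg (φ' (θ s ω)), norm_nonneg (ξ s ω),
            abs_nonneg ⟪φ' (θ s ω), ξ s ω⟫]
      have h1int : Integrable (fun ω => (1 - μ * γr) * (φ (θ s ω) - φstar)) ℙ :=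
        ((hφint s).sub (integrable_const φstar)).const_mul _
      have h2int : Integrable (fun ω => (L * γr ^ 2 - γr) * ⟪φ' (θ s ω), ξ s ω⟫) ℙ :=
        hIint.const_mul _
      have h3int : Integrable (fun ω => L * γr ^ 2 / 2 * ‖ξ s ω‖ ^ 2) ℙ :=
        (hξ2int s).const_mul _
      have h12int : Integrable (fun ω => (1 - μ * γr) * (φ (θ s ω) - φstar)
          + (L * γr ^ 2 - γr) * ⟪φ' (θ s ω), ξ s ω⟫) ℙ := h1int.add h2int
      have hfint1 : Integrable (fun ω => φ (θ (s + 1) ω) - φstar) ℙ :=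
        (hφint (s + 1)).sub (integrable_const φstar)
      have hmono : ∫ ω, (φ (θ (s + 1) ω) - φstar) ∂ℙ ≤
          ∫ ω, ((1 - μ * γr) * (φ (θ s ω) - φstar)
            + (L * γr ^ 2 - γr) * ⟪φ' (θ s ω), ξ s ω⟫
            + L * γr ^ 2 / 2 * ‖ξ s ω‖ ^ 2) ∂ℙ :=
        integral_mono hfint1 (h12int.add h3int) hpt
      have e1 : ∫ ω, (φ (θ (s + 1) ω) - φstar) ∂ℙ = (∫ ω, φ (θ (s + 1) ω) ∂ℙ) - φstar := by
        rw [integral_sub (hφint (s + 1)) (integrable_const _), integral_const, probReal_univ]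
        simp
      have e0 : ∫ ω, (φ (θ s ω) - φstar) ∂ℙ = (∫ ω, φ (θ s ω) ∂ℙ) - φstar := by
        rw [integral_sub (hφint s) (integrable_const _), integral_const, probReal_univ]
        simp
      have e2 : ∫ ω, ((1 - μ * γr) * (φ (θ s ω) - φstar)
            + (L * γr ^ 2 - γr) * ⟪φ' (θ s ω), ξ s ω⟫
            + L * γr ^ 2 / 2 * ‖ξ s ω‖ ^ 2) ∂ℙ
          = (1 - μ * γr) * ((∫ ω, φ (θ s ω) ∂ℙ) - φstar)
            + L * γr ^ 2 / 2 * (∫ ω, ‖ξ s ω‖ ^ 2 ∂ℙ) := by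
        rw [integral_add h12int h3int, integral_add h1int h2int,
          integral_const_mul, integral_const_mul, integral_const_mul, hI0, e0]
        ring
      rw [e1, e2] at hmono
      have hJ := hvar s
      have hnn : (0:ℝ) ≤ L * γr ^ 2 / 2 :=
        div_nonneg (mul_nonneg hL.le (sq_nonneg γr)) (by norm_num)
      linarith [mul_le_mul_of_nonneg_left hJ hnn]
    -- iterate
    have key := geom_rec_bound_aux (fun n => (∫ ω, φ (θ n ω) ∂ℙ) - φstar)
      (1 - μ * γr) (L * γr ^ 2 / 2 * σr ^ 2) ha0 ha1 hc hstep r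
    have e3 : (r : ℝ) * (L * γr ^ 2 / 2 * σr ^ 2) = L * γr ^ 2 * r / 2 * σr ^ 2 := by ring
    linarith
end
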